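/- Let ρ_λ : S_n → GL(W^λ) be the representation defined by the Young orthogonal form (sending (k−1 k) to s_k). Then for every standard tableau T of shape λ and every 1 ≤ k ≤ n, the Jucys–Murphy element acts diagonally: Σ_{j=1}^{k−1} ρ_λ((j k)) e_T = c_T(k) · e_T (for k = 1 the empty sum equals 0 = c_T(1) · e_T). -/

import Mathlib

noncomputable section

namespace WLE

/-- A filling (bijective labelling of the cells of `μ` by `Fin μ.card`) is *standard* if
its entries increase strictly along rows and columns. -/
def IsStandard (μ : YoungDiagram) (f : {c : ℕ × ℕ // c ∈ μ.cells} ≃ Fin μ.card) : Prop :=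
  ∀ c c' : {c : ℕ × ℕ // c ∈ μ.cells},
    ((c.1.1 = c'.1.1 ∧ c.1.2 < c'.1.2) ∨ (c.1.2 = c'.1.2 ∧ c.1.1 < c'.1.1)) →
      f c < f c'

/-- A standard Young tableau of shape `μ`: a bijection from the cells of `μ` to
`Fin μ.card` (0-indexed entries; the paper's entry `k ∈ {1,…,n}` corresponds to the
value `k − 1 : Fin μ.card`) increasing along rows and columns. -/
def SYT (μ : YoungDiagram) : Type :=
  {f : {c : ℕ × ℕ // c ∈ μ.cells} ≃ Fin μ.card // IsStandard μ f}

instance (μ : YoungDiagram) : Finite (SYT μ) := by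
  have : Finite ({c : ℕ × ℕ // c ∈ μ.cells} ≃ Fin μ.card) :=
    Finite.of_injective (fun f => (f : {c : ℕ × ℕ // c ∈ μ.cells} → Fin μ.card))
      fun f g h => Equiv.coe_fn_injective h
  exact Subtype.finite

noncomputable instance (μ : YoungDiagram) : Fintype (SYT μ) := Fintype.ofFinite _

noncomputable instance (μ : YoungDiagram) : DecidableEq (SYT μ) := Classical.decEq _

/-- `content T k` is the content `j − i` of the cell (row `i`, column `j`, 0-indexed)
of `T` containing the entry `k`. -/
def content {μ : YoungDiagram} (T : SYT μ) (k : Fin μ.card) : ℤ :=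
  ((T.1.symm k).1.2 : ℤ) - ((T.1.symm k).1.1 : ℤ)

/-- The index `k − 1` (in `Fin μ.card`), used to form the adjacent transposition
`(k−1 k)`. -/
def kpred {μ : YoungDiagram} (k : Fin μ.card) : Fin μ.card :=
  ⟨k.val - 1, lt_of_le_of_lt (Nat.sub_le _ _) k.isLt⟩

/-- The filling obtained from `T` by exchanging the entries `k−1` and `k`. -/
def swapped {μ : YoungDiagram} (k : Fin μ.card) (T : SYT μ) :
    {c : ℕ × ℕ // c ∈ μ.cells} ≃ Fin μ.card :=
  T.1.trans (Equiv.swap (kpred k) k)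

/-- The (real) axial distance `d = c_T(k) − c_T(k−1)`. -/
def dval {μ : YoungDiagram} (k : Fin μ.card) (T : SYT μ) : ℝ :=
  ((content T k - content T (kpred k) : ℤ) : ℝ)

noncomputable instance (μ : YoungDiagram) : DecidablePred (IsStandard μ) :=
  fun _ => Classical.propDecidable _

/-- The Young orthogonal form operator `s_k` on `W^μ = EuclideanSpace ℝ (SYT μ)`:
`s_k e_T = (1/d) e_T + √(1 − 1/d²) e_{(k−1 k)T}`, with `d = c_T(k) − c_T(k−1)` and
`e_{(k−1 k)T} = 0` when the swapped filling is not standard. -/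
def youngOp (μ : YoungDiagram) (k : Fin μ.card) :
    EuclideanSpace ℝ (SYT μ) →ₗ[ℝ] EuclideanSpace ℝ (SYT μ) where
  toFun x := WithLp.toLp 2 fun T => (dval k T)⁻¹ * x T +
    Real.sqrt (1 - ((dval k T)⁻¹) ^ 2) *
      (if h : IsStandard μ (swapped k T) then x ⟨swapped k T, h⟩ else 0)
  map_add' x y := by
    ext T
    by_cases h : IsStandard μ (swapped k T) <;>
      simp [h, PiLp.add_apply] <;> (try erw [Pi.add_apply]) <;> ring
  map_smul' c x := by
    ext T
    by_cases h : IsStandard μ (swapped k T) <;>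
      simp [h, PiLp.smul_apply, smul_eq_mul] <;> (try erw [Pi.smul_apply]) <;> (try simp) <;> ring

end WLE

namespace WLE


variable {μ : YoungDiagram}

lemma mem_of_lt_row {i j j' : ℕ} (h : (i, j') ∈ μ) (hj : j ≤ j') : (i, j) ∈ μ :=
  μ.up_left_mem le_rfl hj h

lemma mem_of_lt_col {i i' j : ℕ} (h : (i', j) ∈ μ) (hi : i ≤ i') : (i, j) ∈ μ :=
  μ.up_left_mem hi le_rfl h

lemma content_eq_zero (T : SYT μ) (k : Fin μ.card) (hk : k.val = 0) : content T k = 0 := by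
  set A := T.1.symm k with hA
  have hAk : T.1 A = k := T.1.apply_symm_apply k
  have hrow : A.1.2 = 0 := by
    by_contra h
    have hm : (A.1.1, A.1.2 - 1) ∈ μ := mem_of_lt_row A.2 (Nat.sub_le _ _)
    have h2 := T.2 ⟨(A.1.1, A.1.2 - 1), hm⟩ A (Or.inl ⟨rfl, show A.1.2 - 1 < A.1.2 by omega⟩)
    rw [hAk] at h2
    have h0 := Fin.lt_def.mp h2
    omega
  have hcol : A.1.1 = 0 := by
    by_contra h
    have hm : (A.1.1 - 1, A.1.2) ∈ μ := mem_of_lt_col A.2 (Nat.sub_le _ _)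
    have h2 := T.2 ⟨(A.1.1 - 1, A.1.2), hm⟩ A (Or.inr ⟨rfl, show A.1.1 - 1 < A.1.1 by omega⟩)
    rw [hAk] at h2
    have h0 := Fin.lt_def.mp h2
    omega
  simp [content, ← hA, hrow, hcol]

lemma kpred_lt {k : Fin μ.card} (hk : 1 ≤ k.val) : kpred k < k := by
  simp [Fin.lt_def, kpred]; omega

lemma kpred_ne {k : Fin μ.card} (hk : 1 ≤ k.val) : kpred k ≠ k :=
  Fin.ne_of_lt (kpred_lt hk)

/-- No cell has value strictly between `kpred k` and `k`. -/
lemma no_middle (T : SYT μ) {k : Fin μ.card} (hk : 1 ≤ k.val)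
    {C : {c : ℕ × ℕ // c ∈ μ.cells}} (h1 : kpred k < T.1 C) (h2 : T.1 C < k) : False := by
  rw [Fin.lt_def] at h1 h2
  simp [kpred] at h1
  omega

lemma content_ne (T : SYT μ) {k : Fin μ.card} (hk : 1 ≤ k.val) :
    content T k ≠ content T (kpred k) := by
  intro h
  set A := T.1.symm (kpred k) with hA
  set B := T.1.symm k with hB
  have hAv : T.1 A = kpred k := T.1.apply_symm_apply _
  have hBv : T.1 B = k := T.1.apply_symm_apply _
  have hAB : A ≠ B := by
    intro hEq; rw [hEq, hBv] at hAv; exact kpred_ne hk hAv.symm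
  have hd : (B.1.2 : ℤ) - B.1.1 = (A.1.2 : ℤ) - A.1.1 := by
    simpa [content, ← hA, ← hB] using h
  rcases lt_trichotomy A.1.1 B.1.1 with hlt | heq | hgt
  · have hj : A.1.2 < B.1.2 := by omega
    have hm : (A.1.1, B.1.2) ∈ μ := mem_of_lt_col B.2 (le_of_lt hlt)
    have h1 := T.2 A ⟨(A.1.1, B.1.2), hm⟩ (Or.inl ⟨rfl, hj⟩)
    have h2 := T.2 ⟨(A.1.1, B.1.2), hm⟩ B (Or.inr ⟨rfl, hlt⟩)
    rw [hAv] at h1; rw [hBv] at h2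
    exact no_middle T hk h1 h2
  · apply hAB
    apply Subtype.ext
    have : A.1.2 = B.1.2 := by omega
    exact Prod.ext heq this
  · have hj : B.1.2 < A.1.2 := by omega
    have hm : (B.1.1, A.1.2) ∈ μ := mem_of_lt_col A.2 (le_of_lt hgt)
    have h1 := T.2 B ⟨(B.1.1, A.1.2), hm⟩ (Or.inl ⟨rfl, hj⟩)
    have h2 := T.2 ⟨(B.1.1, A.1.2), hm⟩ A (Or.inr ⟨rfl, hgt⟩)
    rw [hAv] at h2; rw [hBv] at h1
    rw [Fin.lt_def] at h1 h2
    have := kpred_lt (μ := μ) (k := k) hk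
    rw [Fin.lt_def] at this
    omega


/-- Either the swapped filling is standard, or the axial distance is `±1`. -/
lemma standard_or_adjacent (T : SYT μ) {k : Fin μ.card} (hk : 1 ≤ k.val) :
    IsStandard μ (swapped k T) ∨
      (content T k - content T (kpred k) = 1 ∨ content T k - content T (kpred k) = -1) := by
  set A := T.1.symm (kpred k) with hA
  set B := T.1.symm k with hB
  have hAv : T.1 A = kpred k := T.1.apply_symm_apply _
  have hBv : T.1 B = k := T.1.apply_symm_apply _
  have hcont : content T k - content T (kpred k) =
      ((B.1.2 : ℤ) - B.1.1) - ((A.1.2 : ℤ) - A.1.1) := by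
    simp [content, ← hA, ← hB]
  by_cases h1 : A.1.1 = B.1.1 ∧ A.1.2 < B.1.2
  · -- same row: must be adjacent, content difference 1
    right; left
    have hadj : B.1.2 = A.1.2 + 1 := by
      by_contra hne
      have hm : (A.1.1, A.1.2 + 1) ∈ μ :=
        μ.up_left_mem (le_of_eq h1.1) (show A.1.2 + 1 ≤ B.1.2 by omega) B.2
      have ha := T.2 A ⟨(A.1.1, A.1.2 + 1), hm⟩
        (Or.inl ⟨rfl, show A.1.2 < A.1.2 + 1 by omega⟩)
      have hb := T.2 ⟨(A.1.1, A.1.2 + 1), hm⟩ B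
        (Or.inl ⟨h1.1, show A.1.2 + 1 < B.1.2 by omega⟩)
      rw [hAv] at ha; rw [hBv] at hb
      exact no_middle T hk ha hb
    rw [hcont]; omega
  · by_cases h2 : A.1.2 = B.1.2 ∧ A.1.1 < B.1.1
    · -- same column: must be adjacent, content difference -1
      right; right
      have hadj : B.1.1 = A.1.1 + 1 := by
        by_contra hne
        have hm : (A.1.1 + 1, A.1.2) ∈ μ :=
          μ.up_left_mem (show A.1.1 + 1 ≤ B.1.1 by omega) (le_of_eq h2.1) B.2
        have ha := T.2 A ⟨(A.1.1 + 1, A.1.2), hm⟩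
          (Or.inr ⟨rfl, show A.1.1 < A.1.1 + 1 by omega⟩)
        have hb := T.2 ⟨(A.1.1 + 1, A.1.2), hm⟩ B
          (Or.inr ⟨h2.1, show A.1.1 + 1 < B.1.1 by omega⟩)
        rw [hAv] at ha; rw [hBv] at hb
        exact no_middle T hk ha hb
      rw [hcont]; omega
    · -- incomparable: swapped filling is standard
      left
      intro c c' hlt
      have hf := T.2 c c' hlt
      simp only [swapped, Equiv.trans_apply]
      have hkk := kpred_lt (μ := μ) (k := k) hk
      have hnotAB : ¬ (T.1 c = kpred k ∧ T.1 c' = k) := by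
        rintro ⟨hc, hc'⟩
        have hcA : c = A := by rw [hA, ← hc, Equiv.symm_apply_apply]
        have hcB : c' = B := by rw [hB, ← hc', Equiv.symm_apply_apply]
        subst hcA; subst hcB
        rcases hlt with h | h
        · exact h1 h
        · exact h2 h
      rw [Fin.lt_def] at hf hkk ⊢
      have hkv : (kpred k).val + 1 = k.val := by simp [kpred]; omega
      have hx : ¬(T.1 c = kpred k) ∨ ¬(T.1 c' = k) := not_and_or.mp hnotAB
      clear hnotAB hcont hAv hBv hA hB
      rcases hx with hx | hx <;>
        rw [Equiv.swap_apply_def, Equiv.swap_apply_def] <;>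
        split_ifs <;>
        simp only [Fin.lt_def, Fin.ext_iff, ne_eq] at * <;>
        omega


lemma swapped_symm (T : SYT μ) (k : Fin μ.card) :
    (swapped k T).symm = (Equiv.swap (kpred k) k).trans T.1.symm :=
  Equiv.ext fun _ => rfl

lemma content_swapped_k (T : SYT μ) (k : Fin μ.card) (h : IsStandard μ (swapped k T)) :
    content (⟨swapped k T, h⟩ : SYT μ) k = content T (kpred k) := by
  simp [content, swapped_symm, Equiv.swap_apply_right]

lemma content_swapped_kpred (T : SYT μ) (k : Fin μ.card) (h : IsStandard μ (swapped k T)) :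
    content (⟨swapped k T, h⟩ : SYT μ) (kpred k) = content T k := by
  simp [content, swapped_symm, Equiv.swap_apply_left]

lemma dval_swapped (T : SYT μ) (k : Fin μ.card) (h : IsStandard μ (swapped k T)) :
    dval k (⟨swapped k T, h⟩ : SYT μ) = -dval k T := by
  simp [dval, content_swapped_k, content_swapped_kpred]

lemma swapped_swapped (T : SYT μ) (k : Fin μ.card) (h : IsStandard μ (swapped k T)) :
    swapped k (⟨swapped k T, h⟩ : SYT μ) = T.1 := by
  simp [swapped, Equiv.trans_assoc]

lemma swapped_ne (T : SYT μ) {k : Fin μ.card} (hk : 1 ≤ k.val) : swapped k T ≠ T.1 := by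
  intro hEq
  have h1 : swapped k T (T.1.symm (kpred k)) = k := by
    simp [swapped, Equiv.swap_apply_left]
  rw [hEq] at h1
  simp at h1
  exact kpred_ne hk h1

lemma dval_int (T : SYT μ) (k : Fin μ.card) :
    dval k T = ((content T k - content T (kpred k) : ℤ) : ℝ) := rfl

lemma dval_ne_zero (T : SYT μ) {k : Fin μ.card} (hk : 1 ≤ k.val) : dval k T ≠ 0 := by
  rw [dval_int]
  exact_mod_cast sub_ne_zero.mpr (content_ne T hk)

lemma dval_inv_sq_le_one (T : SYT μ) {k : Fin μ.card} (hk : 1 ≤ k.val) :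
    ((dval k T)⁻¹) ^ 2 ≤ 1 := by
  have h1 : (1 : ℝ) ≤ |dval k T| := by
    rw [dval_int]
    rw [← Int.cast_abs]
    exact_mod_cast Int.one_le_abs (sub_ne_zero.mpr (content_ne T hk))
  rw [inv_pow]
  apply inv_le_one_of_one_le₀
  nlinarith [sq_abs (dval k T), abs_nonneg (dval k T)]

lemma sq_sqrt_dval (T : SYT μ) {k : Fin μ.card} (hk : 1 ≤ k.val) :
    Real.sqrt (1 - ((dval k T)⁻¹) ^ 2) ^ 2 = 1 - ((dval k T)⁻¹) ^ 2 :=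
  Real.sq_sqrt (by linarith [dval_inv_sq_le_one T hk])

lemma youngOp_apply (k : Fin μ.card) (x : EuclideanSpace ℝ (SYT μ)) (S : SYT μ) :
    youngOp μ k x S = (dval k S)⁻¹ * x S +
      Real.sqrt (1 - ((dval k S)⁻¹) ^ 2) *
        (if h : IsStandard μ (swapped k S) then x (⟨swapped k S, h⟩ : SYT μ) else 0) := rfl

/-- basis vector -/
def eT (T : SYT μ) : EuclideanSpace ℝ (SYT μ) := EuclideanSpace.single T 1

lemma single_apply (T S : SYT μ) :
    (EuclideanSpace.single T (1 : ℝ)) S = if S = T then 1 else 0 :=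
  EuclideanSpace.single_apply T 1 S

lemma eT_apply (T S : SYT μ) : eT T S = if S = T then 1 else 0 :=
  EuclideanSpace.single_apply T 1 S

lemma youngOp_single_std (T : SYT μ) {k : Fin μ.card} (hk : 1 ≤ k.val)
    (h : IsStandard μ (swapped k T)) :
    youngOp μ k (eT T) =
      (dval k T)⁻¹ • eT T +
        Real.sqrt (1 - ((dval k T)⁻¹) ^ 2) •
          eT (⟨swapped k T, h⟩ : SYT μ) := by
  have hT'T : (⟨swapped k T, h⟩ : SYT μ) ≠ T := fun hEq =>
    swapped_ne T hk (congrArg Subtype.val hEq)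
  ext S
  rw [youngOp_apply]
  simp only [PiLp.add_apply, PiLp.smul_apply, smul_eq_mul]
  rcases eq_or_ne S T with rfl | hST
  · rw [dif_pos h]
    simp only [eT_apply, if_true]
    erw [eT_apply, eT_apply, if_neg hT'T, if_neg (Ne.symm hT'T)]
    try ring
  · rcases eq_or_ne S ⟨swapped k T, h⟩ with rfl | hST'
    · have hstd : IsStandard μ (swapped k (⟨swapped k T, h⟩ : SYT μ)) := by
        rw [swapped_swapped]; exact T.2
      rw [dif_pos hstd]
      have he1 : (⟨swapped k (⟨swapped k T, h⟩ : SYT μ), hstd⟩ : SYT μ) = T :=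
        Subtype.ext (swapped_swapped T k h)
      rw [he1, dval_swapped T k h]
      simp only [eT_apply, if_true]
      erw [eT_apply, eT_apply, if_neg hT'T, if_pos rfl]
      simp only [inv_neg, neg_sq]
      ring
    · have hz : (if h' : IsStandard μ (swapped k S) then
          eT T (⟨swapped k S, h'⟩ : SYT μ) else 0) = 0 := by
        split_ifs with h'
        · erw [eT_apply, if_neg]
          intro hEq
          apply hST'
          apply Subtype.ext
          have h3 := congrArg Subtype.val hEq
          simp only at h3
          simp only [swapped] at h3 ⊢
          rw [← h3, Equiv.trans_assoc, Equiv.swap_swap]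
          rfl
        · rfl
      rw [hz]
      simp only [eT_apply]
      erw [eT_apply, if_neg hST, if_neg hST']
      ring

lemma youngOp_single_nonstd (T : SYT μ) {k : Fin μ.card}
    (h : ¬ IsStandard μ (swapped k T)) :
    youngOp μ k (eT T) =
      (dval k T)⁻¹ • eT T := by
  ext S
  rw [youngOp_apply]
  simp only [PiLp.smul_apply, smul_eq_mul]
  have hz : (if h' : IsStandard μ (swapped k S) then
      eT T (⟨swapped k S, h'⟩ : SYT μ) else 0) = 0 := by
    split_ifs with h'
    · erw [eT_apply, if_neg]
      intro hEq
      apply h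
      have := congrArg Subtype.val hEq
      simp only at this
      have h2 : swapped k T = S.1 := by
        simp only [swapped] at this ⊢
        rw [← this, Equiv.trans_assoc, Equiv.swap_swap]
        rfl
      rw [h2]; exact S.2
    · rfl
  rw [hz]
  rcases eq_or_ne S T with rfl | hST
  · ring
  · rw [eT_apply, if_neg hST]
    ring


lemma Iio_eq {k : Fin μ.card} (hk : 1 ≤ k.val) :
    Finset.Iio k = insert (kpred k) (Finset.Iio (kpred k)) := by
  ext j
  simp only [Finset.mem_Iio, Finset.mem_insert, Fin.lt_def, Fin.ext_iff]
  have : (kpred k).val = k.val - 1 := rfl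
  omega

/-- Let `ρ_λ : S_n → GL(W^λ)` be the representation defined by the
Young orthogonal form (sending each adjacent transposition `(k−1 k)` to `s_k`).
Then for every standard tableau `T` of shape `λ` and every `1 ≤ k ≤ n` (0-indexed
`k : Fin μ.card`), the Jucys–Murphy element acts diagonally:
`Σ_{j<k} ρ_λ((j k)) e_T = c_T(k) · e_T` (for the smallest `k` the empty sum is
`0 = c_T(k) · e_T`, the content of the first entry being `0`). -/
theorem jucysMurphy_diagonal (μ : YoungDiagram) (hn : 2 ≤ μ.card)
    (ρ : Equiv.Perm (Fin μ.card) →* (Module.End ℝ (EuclideanSpace ℝ (SYT μ)))ˣ)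
    (hρ : ∀ k : Fin μ.card, 1 ≤ k.val →
      ((ρ (Equiv.swap (kpred k) k) : Module.End ℝ (EuclideanSpace ℝ (SYT μ)))) =
        youngOp μ k)
    (T : SYT μ) (k : Fin μ.card) :
    ∑ j ∈ Finset.Iio k,
        (ρ (Equiv.swap j k) : Module.End ℝ (EuclideanSpace ℝ (SYT μ)))
          (EuclideanSpace.single T (1 : ℝ)) =
      ((content T k : ℝ)) • EuclideanSpace.single T (1 : ℝ) := by
  suffices H : ∀ n : ℕ, ∀ k : Fin μ.card, k.val = n → ∀ T : SYT μ,
      ∑ j ∈ Finset.Iio k,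
          (ρ (Equiv.swap j k) : Module.End ℝ (EuclideanSpace ℝ (SYT μ))) (eT T) =
        ((content T k : ℝ)) • eT T by
    exact H k.val k rfl T
  intro n
  induction n using Nat.strong_induction_on with
  | _ n IH =>
  intro k hkn T
  rcases Nat.eq_zero_or_pos n with hn0 | hpos
  · subst hn0
    have hIio : Finset.Iio k = (∅ : Finset (Fin μ.card)) := by
      ext j; simp only [Finset.mem_Iio, Fin.lt_def, Finset.notMem_empty, iff_false, not_lt]
      omega
    rw [hIio, Finset.sum_empty, content_eq_zero T k hkn]
    simp
  · have hk1 : 1 ≤ k.val := by omega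
    have hkpv : (kpred k).val = n - 1 := by
      have : (kpred k).val = k.val - 1 := rfl
      omega
    have hkplt : n - 1 < n := by omega
    rw [Iio_eq hk1, Finset.sum_insert (by simp)]
    set Y := youngOp μ k with hY
    have hswap : ∀ j ∈ Finset.Iio (kpred k),
        (ρ (Equiv.swap j k) : Module.End ℝ (EuclideanSpace ℝ (SYT μ))) =
          Y * (ρ (Equiv.swap j (kpred k)) : Module.End ℝ (EuclideanSpace ℝ (SYT μ))) * Y := by
      intro j hj
      rw [Finset.mem_Iio] at hj
      have hjkp : j ≠ kpred k := Fin.ne_of_lt hj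
      have hjk : j ≠ k := Fin.ne_of_lt (lt_trans hj (kpred_lt hk1))
      have hconj : Equiv.swap j k =
          Equiv.swap (kpred k) k * Equiv.swap j (kpred k) * Equiv.swap (kpred k) k := by
        rw [Equiv.swap_mul_swap_mul_swap hjkp hjk, Equiv.swap_comm]
      rw [hconj, map_mul, map_mul, Units.val_mul, Units.val_mul, hρ k hk1, hY]
    rw [Finset.sum_congr rfl fun j hj => by
      rw [hswap j hj, Module.End.mul_apply, Module.End.mul_apply]]
    rw [hρ k hk1]
    set a := (dval k T)⁻¹ with ha
    set b := Real.sqrt (1 - ((dval k T)⁻¹) ^ 2) with hb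
    have hprod : a * dval k T = 1 := inv_mul_cancel₀ (dval_ne_zero T hk1)
    have hd : dval k T = ((content T k : ℝ)) - ((content T (kpred k) : ℝ)) := by
      rw [dval_int]; push_cast; ring
    set cp := ((content T (kpred k) : ℝ)) with hcp
    set ck := ((content T k : ℝ)) with hck
    by_cases h : IsStandard μ (swapped k T)
    · set T' : SYT μ := ⟨swapped k T, h⟩ with hT'
      have hb2 : b ^ 2 = 1 - a ^ 2 := sq_sqrt_dval T hk1
      have hYT : Y (eT T) = a • eT T + b • eT T' := youngOp_single_std T hk1 h
      have hstd : IsStandard μ (swapped k T') := by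
        rw [hT', swapped_swapped]; exact T.2
      have hYT' : Y (eT T') = (-a) • eT T' + b • eT T := by
        have h0 := youngOp_single_std T' hk1 hstd
        have he1 : (⟨swapped k T', hstd⟩ : SYT μ) = T := Subtype.ext (swapped_swapped T k h)
        rw [he1, hT', dval_swapped T k h, inv_neg, neg_sq, ← hT'] at h0
        rw [h0, ha]
      have hsumT : ∑ j ∈ Finset.Iio (kpred k),
          (ρ (Equiv.swap j (kpred k)) : Module.End ℝ (EuclideanSpace ℝ (SYT μ))) (eT T) =
            cp • eT T := IH (n-1) hkplt (kpred k) hkpv T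
      have hsumT' : ∑ j ∈ Finset.Iio (kpred k),
          (ρ (Equiv.swap j (kpred k)) : Module.End ℝ (EuclideanSpace ℝ (SYT μ))) (eT T') =
            ck • eT T' := by
        have h1 := IH (n-1) hkplt (kpred k) hkpv T'
        rw [hT', content_swapped_kpred T k h, ← hck] at h1
        exact h1
      calc Y (eT T) + ∑ j ∈ Finset.Iio (kpred k),
            Y ((ρ (Equiv.swap j (kpred k)) : Module.End ℝ (EuclideanSpace ℝ (SYT μ))) (Y (eT T)))
          = Y (eT T) + Y (∑ j ∈ Finset.Iio (kpred k),
            (ρ (Equiv.swap j (kpred k)) : Module.End ℝ (EuclideanSpace ℝ (SYT μ))) (Y (eT T))) := by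
            rw [map_sum]
        _ = Y (eT T) + Y (a • (cp • eT T) + b • (ck • eT T')) := by
            rw [hYT]
            congr 2
            rw [Finset.sum_congr rfl fun j _ => by rw [map_add, map_smul, map_smul],
              Finset.sum_add_distrib, ← Finset.smul_sum, ← Finset.smul_sum, hsumT, hsumT']
        _ = (a • eT T + b • eT T') + (a • (cp • (a • eT T + b • eT T'))
              + b • (ck • ((-a) • eT T' + b • eT T))) := by
            simp only [map_add, map_smul]
            rw [hYT, hYT']
        _ = (a * cp * a + b * ck * b + a) • eT T
              + (a * cp * b + b * ck * (-a) + b) • eT T' := by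
            module
        _ = ck • eT T := by
            have hc1 : a * cp * a + b * ck * b + a = ck := by
              linear_combination ck * hb2 - a * hprod + a ^ 2 * hd
            have hc2 : a * cp * b + b * ck * (-a) + b = 0 := by
              linear_combination (a * b) * hd - b * hprod
            rw [hc1, hc2, zero_smul, add_zero]
    · have hYT : Y (eT T) = a • eT T := youngOp_single_nonstd T h
      have hpm : dval k T = 1 ∨ dval k T = -1 := by
        rcases standard_or_adjacent T hk1 with h' | h' | h'
        · exact absurd h' h
        · left; rw [dval_int, h']; norm_num
        · right; rw [dval_int, h']; norm_num
      have hsumT : ∑ j ∈ Finset.Iio (kpred k),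
          (ρ (Equiv.swap j (kpred k)) : Module.End ℝ (EuclideanSpace ℝ (SYT μ))) (eT T) =
            cp • eT T := IH (n-1) hkplt (kpred k) hkpv T
      calc Y (eT T) + ∑ j ∈ Finset.Iio (kpred k),
            Y ((ρ (Equiv.swap j (kpred k)) : Module.End ℝ (EuclideanSpace ℝ (SYT μ))) (Y (eT T)))
          = Y (eT T) + Y (∑ j ∈ Finset.Iio (kpred k),
            (ρ (Equiv.swap j (kpred k)) : Module.End ℝ (EuclideanSpace ℝ (SYT μ))) (Y (eT T))) := by
            rw [map_sum]
        _ = Y (eT T) + Y (a • (cp • eT T)) := by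
            rw [hYT]
            congr 2
            rw [Finset.sum_congr rfl fun j _ => by rw [map_smul], ← Finset.smul_sum, hsumT]
        _ = a • eT T + (a * cp * a) • eT T := by
            rw [map_smul, map_smul, hYT]
            module
        _ = ck • eT T := by
            have h2 : dval k T * dval k T = 1 := by
              rcases hpm with h1 | h1 <;> rw [h1] <;> norm_num
            have h3 : a = dval k T := by
              rw [ha]; rcases hpm with h1 | h1 <;> rw [h1] <;> norm_num
            have hc1 : a + a * cp * a = ck := by
              rw [h3]; linear_combination cp * h2 + hd
            rw [← add_smul, hc1]

end WLE
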